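/- For a discrete-time Dynkin game with horizon N, payoff H(σ,τ) = X_σ 1_{σ<τ} + Y_τ 1_{τ≤σ}, and value process V defined by the backward recursion, the stopped process V_{n ∧ σ* ∧ τ*} is a martingale, where σ* = min{n : V_n = X_n} ∧ N and τ* = min{n : V_n = Y_n} ∧ N. -/

import Mathlib

open MeasureTheory

/-- For the discrete-time Dynkin game value process `V` defined by backward
recursion, the process stopped at `σ* ∧ τ*` is a martingale, where `σ*` and `τ*` are the
first times `V` hits `X` resp. `Y`. -/
theorem dynkin_stopped_value_martingale {Ω : Type*} {m : MeasurableSpace Ω} {μ : Measure Ω}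
    [IsProbabilityMeasure μ] (ℱ : Filtration ℕ m) (N : ℕ) (X Y V : ℕ → Ω → ℝ)
    (hX : Adapted ℱ X) (hY : Adapted ℱ Y)
    (hXi : ∀ n, Integrable (X n) μ) (hYi : ∀ n, Integrable (Y n) μ)
    (hord : ∀ n < N, ∀ ω, Y n ω ≤ X n ω) (hterm : X N = Y N)
    (hVN : V N = X N)
    (hVrec : ∀ n < N, V n = fun ω => min (X n ω) (max (Y n ω) ((μ[V (n + 1) | ℱ n]) ω)))
    (σs τs : Ω → ℕ)
    (hσ : ∀ ω, σs ω = sInf {n | V n ω = X n ω})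
    (hτ : ∀ ω, τs ω = sInf {n | V n ω = Y n ω}) :
    Martingale (fun n ω => V (min n (min (σs ω) (τs ω))) ω) ℱ μ := by
  classical
  set π : Ω → ℕ := fun ω => min (σs ω) (τs ω) with hπdef
  -- membership of N in the hitting sets
  have hNσ : ∀ ω, V N ω = X N ω := fun ω => by rw [hVN]
  have hNτ : ∀ ω, V N ω = Y N ω := fun ω => by rw [hVN, hterm]
  have hσN : ∀ ω, σs ω ≤ N := fun ω => by
    rw [hσ]; exact Nat.sInf_le (hNσ ω)
  have hτN : ∀ ω, τs ω ≤ N := fun ω => by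
    rw [hτ]; exact Nat.sInf_le (hNτ ω)
  have hπN : ∀ ω, π ω ≤ N := fun ω => le_trans (min_le_left _ _) (hσN ω)
  -- adaptedness and integrability of V up to time N, by backward induction
  have hVkey : ∀ k n, n + k = N → StronglyMeasurable[ℱ n] (V n) ∧ Integrable (V n) μ := by
    intro k
    induction k with
    | zero =>
      intro n hn
      have : n = N := by omega
      subst this
      rw [hVN]
      exact ⟨(hX _).stronglyMeasurable, hXi _⟩
    | succ k ih =>
      intro n hn
      have hnN : n < N := by omega
      obtain ⟨ihm, ihi⟩ := ih (n + 1) (by omega)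
      have hrec := hVrec n hnN
      have heq : V n = (X n) ⊓ ((Y n) ⊔ (μ[V (n + 1) | ℱ n])) := by
        rw [hrec]; ext ω; simp [min_def, max_def]
      constructor
      · rw [hrec]
        exact ((hX n).min
          ((hY n).max stronglyMeasurable_condExp.measurable)).stronglyMeasurable
      · rw [heq]
        exact (hXi n).inf ((hYi n).sup integrable_condExp)
  have hVmeas : ∀ n, n ≤ N → StronglyMeasurable[ℱ n] (V n) := fun n hn =>
    (hVkey (N - n) n (by omega)).1
  have hVint : ∀ n, n ≤ N → Integrable (V n) μ := fun n hn =>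
    (hVkey (N - n) n (by omega)).2
  -- σs and τs are stopping times
  have hstop : ∀ (ρ : Ω → ℕ) (Z : ℕ → Ω → ℝ), Adapted ℱ Z → (∀ ω, V N ω = Z N ω) →
      (∀ ω, ρ ω = sInf {n | V n ω = Z n ω}) → IsStoppingTime ℱ (fun ω => (ρ ω : WithTop ℕ)) := by
    intro ρ Z hZ hNZ hρ n
    have hρN : ∀ ω, ρ ω ≤ N := fun ω => by rw [hρ]; exact Nat.sInf_le (hNZ ω)
    have hset : {ω | ρ ω ≤ n} = ⋃ k ≤ min n N, {ω | V k ω = Z k ω} := by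
      ext ω
      simp only [Set.mem_setOf_eq, Set.mem_iUnion, exists_prop]
      constructor
      · intro h
        refine ⟨ρ ω, le_min h (hρN ω), ?_⟩
        have hne : {j | V j ω = Z j ω}.Nonempty := ⟨N, hNZ ω⟩
        have := Nat.sInf_mem hne
        rw [← hρ] at this
        exact this
      · rintro ⟨k, hk, hke⟩
        calc ρ ω ≤ k := by rw [hρ]; exact Nat.sInf_le hke
        _ ≤ n := le_trans hk (min_le_left _ _)
    convert_to MeasurableSet[ℱ n] {ω | ρ ω ≤ n} using 1
    · ext ω; simp
    rw [hset]
    refine MeasurableSet.biUnion (Set.to_countable _) ?_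
    intro k hk
    have hkN : k ≤ N := le_trans hk (min_le_right _ _)
    have hkn : k ≤ n := le_trans hk (min_le_left _ _)
    exact ℱ.mono hkn _ ((hVmeas k hkN).measurableSet_eq_fun (hZ k).stronglyMeasurable)
  have hstσ : IsStoppingTime ℱ (fun ω => (σs ω : WithTop ℕ)) := hstop σs X hX hNσ hσ
  have hstτ : IsStoppingTime ℱ (fun ω => (τs ω : WithTop ℕ)) := hstop τs Y hY hNτ hτ
  have hstπ : IsStoppingTime ℱ (fun ω => (π ω : WithTop ℕ)) := hstσ.min hstτ
  -- the truncated process W and the stopped process M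
  set W : ℕ → Ω → ℝ := fun n ω => V (min n N) ω with hWdef
  have hWadp : StronglyAdapted ℱ W := fun n =>
    (hVmeas (min n N) (min_le_right _ _)).mono (ℱ.mono (min_le_left _ _))
  have hWint : ∀ n, Integrable (W n) μ := fun n => hVint (min n N) (min_le_right _ _)
  set πT : Ω → ℕ∞ := fun ω => (π ω : WithTop ℕ) with hπTdef
  have hSP : ∀ n ω, stoppedProcess W πT n ω = W (min n (π ω)) ω := fun n ω => rfl
  have hM : (fun n ω => V (min n (min (σs ω) (τs ω))) ω) = stoppedProcess W πT := by
    funext n ω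
    simp only [hSP]; simp only [hWdef]
    rw [min_eq_left (le_trans (min_le_right n (π ω)) (hπN ω))]
  rw [hM]
  -- adaptedness of the stopped process
  have hMadp : StronglyAdapted ℱ (stoppedProcess W πT) := by
    intro n
    rw [stoppedProcess_eq]
    refine StronglyMeasurable.add ?_ ?_
    · exact (hWadp n).indicator (hstπ.measurableSet_ge n)
    · have hsum : (∑ i ∈ Finset.range n, Set.indicator {ω | πT ω = i} (W i)) =
          fun a => ∑ i ∈ Finset.range n, Set.indicator {ω | πT ω = i} (W i) a := by
        funext a; exact Finset.sum_apply _ _ _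
      rw [hsum]
      refine Finset.stronglyMeasurable_fun_sum _ fun i hi => ?_
      simp only [Finset.mem_range] at hi
      exact ((hWadp i).mono (ℱ.mono hi.le)).indicator
        (ℱ.mono hi.le _ (hstπ.measurableSet_eq i))
  -- integrability of the stopped process
  have hMint : ∀ n, Integrable (stoppedProcess W πT n) μ := by
    intro n
    rw [stoppedProcess_eq]
    refine Integrable.add ?_ ?_
    · exact (hWint n).indicator (ℱ.le n _ (hstπ.measurableSet_ge n))
    · have hsum : (∑ i ∈ Finset.range n, Set.indicator {ω | πT ω = i} (W i)) =
          fun a => ∑ i ∈ Finset.range n, Set.indicator {ω | πT ω = i} (W i) a := by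
        funext a; exact Finset.sum_apply _ _ _
      rw [hsum]
      refine integrable_finset_sum _ fun i hi => ?_
      exact (hWint i).indicator (ℱ.le i _ (hstπ.measurableSet_eq i))
  refine martingale_nat hMadp hMint fun n => ?_
  -- key pointwise identity
  by_cases hnN : n < N
  · set e : Ω → ℝ := μ[V (n + 1) | ℱ n] with hedef
    have hkey : stoppedProcess W πT (n + 1) = fun ω => stoppedProcess W πT n ω +
        Set.indicator {a | n < π a} (fun a => V (n + 1) a - e a) ω := by
      funext ω
      by_cases hω : n < π ω
      · have h1 : min (n + 1) (π ω) = n + 1 := min_eq_left hω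
        have h2 : min n (π ω) = n := min_eq_left hω.le
        have hσω : n < σs ω := lt_of_lt_of_le hω (min_le_left _ _)
        have hτω : n < τs ω := lt_of_lt_of_le hω (min_le_right _ _)
        have hVX : V n ω ≠ X n ω := by
          intro h
          have : σs ω ≤ n := by rw [hσ]; exact Nat.sInf_le h
          omega
        have hVY : V n ω ≠ Y n ω := by
          intro h
          have : τs ω ≤ n := by rw [hτ]; exact Nat.sInf_le h
          omega
        have hVe : V n ω = e ω := by
          have hrec := congrFun (hVrec n hnN) ω
          rcases min_cases (X n ω) (max (Y n ω) (e ω)) with ⟨h, _⟩ | ⟨h, _⟩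
          · exact absurd (hrec.trans h) hVX
          · rcases max_cases (Y n ω) (e ω) with ⟨h', _⟩ | ⟨h', _⟩
            · exact absurd (hrec.trans (h.trans h')) hVY
            · exact hrec.trans (h.trans h')
        rw [Set.indicator_of_mem (show ω ∈ {a | n < π a} from hω)]
        simp only [hSP]; simp only [hWdef]
        rw [h1, h2, min_eq_left (show n + 1 ≤ N by omega), min_eq_left (show n ≤ N by omega),
          hVe]
        ring
      · rw [Set.indicator_of_notMem (show ω ∉ {a | n < π a} from hω)]
        have hπn : π ω ≤ n := by omega
        simp only [hSP]
        rw [min_eq_right hπn, min_eq_right (le_trans hπn (Nat.le_succ n)), add_zero]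
    have hA : MeasurableSet[ℱ n] {a | n < π a} := by
      have : {a | n < π a} = {a | π a ≤ n}ᶜ := by
        ext a; simp only [Set.mem_setOf_eq, Set.mem_compl_iff, not_le]
      rw [this]
      convert (hstπ n).compl using 1
      ext a; simp [hπTdef]
    have hgint : Integrable (fun a => V (n + 1) a - e a) μ :=
      (hVint (n + 1) (by omega)).sub integrable_condExp
    have hcond0 : μ[fun a => V (n + 1) a - e a | ℱ n] =ᵐ[μ] 0 := by
      have h1 : μ[V (n + 1) - e | ℱ n] =ᵐ[μ] μ[V (n + 1) | ℱ n] - μ[e | ℱ n] :=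
        condExp_sub (hVint (n + 1) (by omega)) integrable_condExp _
      have h2 : μ[e | ℱ n] = e :=
        condExp_of_stronglyMeasurable (ℱ.le n) stronglyMeasurable_condExp integrable_condExp
      filter_upwards [h1] with a ha
      simp only [Pi.zero_apply]
      calc (μ[fun a => V (n + 1) a - e a | ℱ n]) a = (μ[V (n + 1) - e | ℱ n]) a := rfl
        _ = (μ[V (n + 1) | ℱ n]) a - (μ[e | ℱ n]) a := ha
        _ = 0 := by rw [h2]; exact sub_self (e a)
    calc stoppedProcess W πT n
        =ᵐ[μ] μ[stoppedProcess W πT n | ℱ n] :=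
          Filter.EventuallyEq.of_eq
            (condExp_of_stronglyMeasurable (ℱ.le n) (hMadp n) (hMint n)).symm
      _ =ᵐ[μ] μ[stoppedProcess W πT n | ℱ n] +
            Set.indicator {a | n < π a} (μ[fun a => V (n + 1) a - e a | ℱ n]) := by
          have : Set.indicator {a | n < π a} (μ[fun a => V (n + 1) a - e a | ℱ n]) =ᵐ[μ]
              (0 : Ω → ℝ) := by
            filter_upwards [hcond0] with a ha
            simp only [Set.indicator_apply, Pi.zero_apply]
            split <;> simp [ha]
          filter_upwards [this] with a ha
          simp [ha]
      _ =ᵐ[μ] μ[stoppedProcess W πT n | ℱ n] +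
            μ[Set.indicator {a | n < π a} (fun a => V (n + 1) a - e a) | ℱ n] := by
          have := (condExp_indicator (μ := μ) hgint hA).symm
          filter_upwards [this] with a ha
          simp [ha]
      _ =ᵐ[μ] μ[stoppedProcess W πT n +
            Set.indicator {a | n < π a} (fun a => V (n + 1) a - e a) | ℱ n] :=
          (condExp_add (hMint n) (hgint.indicator (ℱ.le n _ hA)) _).symm
      _ =ᵐ[μ] μ[stoppedProcess W πT (n + 1) | ℱ n] := by rw [hkey]; rfl
  · -- n ≥ N : the stopped process is constant
    have hkey : stoppedProcess W πT (n + 1) = stoppedProcess W πT n := by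
      funext ω
      have hπn : π ω ≤ n := le_trans (hπN ω) (by omega)
      simp only [hSP]
      rw [min_eq_right hπn, min_eq_right (le_trans hπn (Nat.le_succ n))]
    rw [hkey]
    exact Filter.EventuallyEq.of_eq
      (condExp_of_stronglyMeasurable (ℱ.le n) (hMadp n) (hMint n)).symm
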